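/- Let λ ∈ ℂ and set Λ = max{1, |λ|}. There exist constants C > 0 and ρ₀ > 0 (depending only on λ) such that for every ρ ≥ ρ₀ and all natural numbers n, k with |n − 2√Λ·ρ| ≤ 1 and |k − 12√Λ·√ρ| ≤ 1, the following holds. Set b = (ρ + √ρ)^{−2k}·μ_n(ρ + √ρ)/μ_{n−2k}(ρ + √ρ) and define R(r) = b·r^{2k}·μ_{n−2k}(r)/μ_n(r). Then |R(r)| ≤ e^{−C} for all r ∈ [ρ, ρ + (2/3)√ρ], and |R(r)| ≥ e^{C} for all r ∈ [ρ + (4/3)√ρ, ρ + 2√ρ]. -/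

import Mathlib

noncomputable section

/-- `μ_n(r) = exp(n·[Log(√(1 − λr²/n²) + 1) − √(1 − λr²/n²) − Log 2 + 1])`,
where `Log` and `√` (i.e. `cpow (1/2)`) are the principal branches. -/
def mu (lam : ℂ) (n : ℕ) (r : ℝ) : ℂ :=
  Complex.exp ((n : ℂ) *
    (Complex.log ((1 - lam * (r : ℂ) ^ 2 / (n : ℂ) ^ 2) ^ ((1 : ℂ) / 2) + 1)
      - (1 - lam * (r : ℂ) ^ 2 / (n : ℂ) ^ 2) ^ ((1 : ℂ) / 2)
      - Complex.log 2 + 1))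

open Complex

def w (lam : ℂ) (m : ℕ) (r : ℝ) : ℂ := (1 - lam * (r:ℂ)^2 / (m:ℂ)^2) ^ ((1:ℂ)/2)

lemma re_cpow_half_nonneg (z : ℂ) : 0 ≤ (z ^ ((1:ℂ)/2)).re := by
  rcases eq_or_ne z 0 with h | h
  · simp [h, Complex.zero_cpow (by norm_num : (1:ℂ)/2 ≠ 0)]
  · rw [Complex.cpow_def_of_ne_zero h, Complex.exp_re]
    apply mul_nonneg (Real.exp_nonneg _)
    apply Real.cos_nonneg_of_mem_Icc
    simp only [Set.mem_Icc, Complex.mul_im, Complex.log_im, Complex.log_re]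
    norm_num
    constructor
    · nlinarith [Real.pi_pos, Complex.neg_pi_lt_arg z]
    · nlinarith [Real.pi_pos, Complex.arg_le_pi z]

lemma sq_cpow_half (z : ℂ) (h : z ≠ 0) : (z ^ ((1:ℂ)/2)) * (z ^ ((1:ℂ)/2)) = z := by
  rw [← Complex.cpow_add _ _ h]
  norm_num

lemma cpow_half_ne_zero {z : ℂ} (h : z ≠ 0) : z ^ ((1:ℂ)/2) ≠ 0 := by
  intro h0
  have := sq_cpow_half z h
  rw [h0, mul_zero] at this
  exact h this.symm

def gC (lam : ℂ) (m : ℕ) (z : ℂ) : ℂ :=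
  (m:ℂ) * (Complex.log ((1 - lam * z^2 / (m:ℂ)^2) ^ ((1:ℂ)/2) + 1)
    - (1 - lam * z^2 / (m:ℂ)^2) ^ ((1:ℂ)/2) - Complex.log 2 + 1)

lemma hasDerivAt_gC (lam : ℂ) (m : ℕ) (hm : (m:ℂ) ≠ 0) (z : ℂ)
    (hre : 0 < (1 - lam * z^2 / (m:ℂ)^2).re) :
    HasDerivAt (gC lam m)
      (lam * z / ((m:ℂ) * ((1 - lam * z^2 / (m:ℂ)^2) ^ ((1:ℂ)/2) + 1))) z := by
  set u : ℂ := 1 - lam * z^2 / (m:ℂ)^2 with hu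
  have hu0 : u ≠ 0 := by
    intro h; rw [h] at hre; simp at hre
  set wz : ℂ := u ^ ((1:ℂ)/2) with hwz
  have hw0 : wz ≠ 0 := cpow_half_ne_zero hu0
  have hwre : 0 ≤ wz.re := re_cpow_half_nonneg u
  have hw1 : wz + 1 ≠ 0 := by
    intro h
    have : (wz + 1).re = 0 := by rw [h]; simp
    simp only [Complex.add_re, Complex.one_re] at this
    linarith
  -- derivative of u
  have hus : HasDerivAt (fun z : ℂ => 1 - lam * z^2 / (m:ℂ)^2)
      (-(lam * (2*z) / (m:ℂ)^2)) z := by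
    have h1 : HasDerivAt (fun z : ℂ => z^2) (2*z) z := by
      simpa using hasDerivAt_pow 2 z
    simpa using ((h1.const_mul lam).div_const ((m:ℂ)^2)).const_sub 1
  have hwd : HasDerivAt (fun z : ℂ => (1 - lam * z^2 / (m:ℂ)^2) ^ ((1:ℂ)/2))
      ((1/2) * u ^ ((1:ℂ)/2 - 1) * (-(lam * (2*z) / (m:ℂ)^2))) z :=
    hus.cpow_const (Complex.mem_slitPlane_iff.2 (Or.inl hre))
  set w' : ℂ := (1/2) * u ^ ((1:ℂ)/2 - 1) * (-(lam * (2*z) / (m:ℂ)^2)) with hw'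
  have hlg : HasDerivAt (fun z : ℂ =>
      Complex.log ((1 - lam * z^2 / (m:ℂ)^2) ^ ((1:ℂ)/2) + 1)) (w' / (wz + 1)) z := by
    refine (hwd.add_const 1).clog ?_
    refine Complex.mem_slitPlane_iff.2 (Or.inl ?_)
    simp only [Complex.add_re, Complex.one_re]; linarith
  have hg : HasDerivAt (gC lam m) ((m:ℂ) * (w' / (wz + 1) - w')) z := by
    unfold gC
    exact (((hlg.sub hwd).sub_const (Complex.log 2)).add_const 1).const_mul (m:ℂ)
  convert hg using 1
  -- algebra: w' * wz = -(lam*z/m^2)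
  have hww : w' * wz = -(lam * z / (m:ℂ)^2) := by
    have h2 : u ^ ((1:ℂ)/2 - 1) = (u ^ ((1:ℂ)/2))⁻¹ := by
      have : (1:ℂ)/2 - 1 = -(1/2) := by norm_num
      rw [this, Complex.cpow_neg]
    rw [hw', h2]
    field_simp [hw0]
    rw [← hwz, mul_div_cancel_right₀ _ hw0]
  have key : w' / (wz + 1) - w' = -(w' * wz) / (wz + 1) := by
    field_simp
    ring
  rw [key, hww]
  field_simp

lemma mu_eq (lam : ℂ) (m : ℕ) (r : ℝ) : mu lam m r = Complex.exp (gC lam m r) := rfl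

lemma norm_mu (lam : ℂ) (m : ℕ) (r : ℝ) : ‖mu lam m r‖ = Real.exp ((gC lam m r).re) := by
  rw [mu_eq]; exact Complex.norm_exp _

lemma norm_R (lam : ℂ) (n n2 k : ℕ) (r r1 : ℝ) (hr : 0 < r) (hr1 : 0 < r1) :
    ‖(((r1 : ℝ) : ℂ) ^ (-(2 * k : ℤ)) * (mu lam n r1 / mu lam n2 r1)) *
        (r : ℂ) ^ (2 * k) * (mu lam n2 r / mu lam n r)‖ =
      Real.exp (((2 * k : ℝ) * Real.log r + (gC lam n2 r).re - (gC lam n r).re)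
        - ((2 * k : ℝ) * Real.log r1 + (gC lam n2 r1).re - (gC lam n r1).re)) := by
  have hmu : ∀ (m : ℕ) (t : ℝ), mu lam m t ≠ 0 := fun m t => Complex.exp_ne_zero _
  simp only [norm_mul, norm_div, norm_zpow, norm_pow]
  rw [Complex.norm_real, Real.norm_of_nonneg hr1.le, Complex.norm_real,
    Real.norm_of_nonneg hr.le]
  rw [norm_mu, norm_mu, norm_mu, norm_mu]
  simp only [Real.exp_sub, Real.exp_add]
  have h1 : Real.exp ((2 * k : ℝ) * Real.log r) = r ^ (2 * k) := by
    rw [show (2 * (k:ℝ)) * Real.log r = ((2*k : ℕ):ℝ) * Real.log r by push_cast; ring,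
      ← Real.log_pow, Real.exp_log (pow_pos hr _)]
  have h2 : Real.exp ((2 * k : ℝ) * Real.log r1) = r1 ^ (2 * k) := by
    rw [show (2 * (k:ℝ)) * Real.log r1 = ((2*k : ℕ):ℝ) * Real.log r1 by push_cast; ring,
      ← Real.log_pow, Real.exp_log (pow_pos hr1 _)]
  have hz : (r1 : ℝ) ^ (-(2 * (k:ℤ))) = (r1 ^ (2*k) : ℝ)⁻¹ := by
    rw [zpow_neg]; norm_cast
  rw [h1, h2, hz]
  have e1 : (0:ℝ) < Real.exp ((gC lam n r).re) := Real.exp_pos _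
  have e2 : (0:ℝ) < Real.exp ((gC lam n2 r).re) := Real.exp_pos _
  have e3 : (0:ℝ) < Real.exp ((gC lam n r1).re) := Real.exp_pos _
  have e4 : (0:ℝ) < Real.exp ((gC lam n2 r1).re) := Real.exp_pos _
  have hrp : (0:ℝ) < r ^ (2*k) := pow_pos hr _
  have hr1p : (0:ℝ) < r1 ^ (2*k) := pow_pos hr1 _
  field_simp

lemma w_facts (lam : ℂ) (L ρ t : ℝ) (hL : 1 ≤ L) (hlam : ‖lam‖ ≤ L^2)
    (hρ : 0 < ρ) (m : ℕ) (hm : 1.91*L*ρ ≤ (m:ℝ)) (ht : 0 < t) (ht2 : t ≤ 1.01*ρ) :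
    0.72 ≤ (1 - lam * (t:ℂ)^2 / (m:ℂ)^2).re ∧
    0.72 ≤ ((1 - lam * (t:ℂ)^2 / (m:ℂ)^2) ^ ((1:ℂ)/2)).re ∧
    1 ≤ ‖(1 - lam * (t:ℂ)^2 / (m:ℂ)^2) ^ ((1:ℂ)/2) + 1‖ := by
  have hLpos : (0:ℝ) < L := lt_of_lt_of_le one_pos hL
  have hmR : (0:ℝ) < (m:ℝ) := lt_of_lt_of_le (by positivity) hm
  set σ : ℂ := lam * (t:ℂ)^2 / (m:ℂ)^2 with hσ
  have habsσ : ‖σ‖ ≤ 0.28 := by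
    have h1 : ‖σ‖ = ‖lam‖ * t^2 / (m:ℝ)^2 := by
      rw [hσ, norm_div, norm_mul, norm_pow, norm_pow, Complex.norm_real,
        Complex.norm_natCast, Real.norm_eq_abs, _root_.sq_abs]
    rw [h1, div_le_iff₀ (by positivity)]
    have ht2' : t^2 ≤ (1.01*ρ)^2 := by nlinarith
    have hm2 : (1.91*L*ρ)^2 ≤ (m:ℝ)^2 := pow_le_pow_left₀ (by positivity) hm 2
    have hlt : ‖lam‖ * t^2 ≤ L^2 * (1.01*ρ)^2 :=
      mul_le_mul hlam ht2' (sq_nonneg t) (sq_nonneg L)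
    nlinarith [sq_nonneg (L*ρ), mul_pos hLpos hρ]
  have hreσ : |σ.re| ≤ 0.28 := le_trans (Complex.abs_re_le_norm σ) habsσ
  have hre_u : 0.72 ≤ (1 - σ).re := by
    simp only [Complex.sub_re, Complex.one_re]
    cases' abs_le.mp hreσ with h1 h2
    linarith
  have hu0 : (1 - σ) ≠ 0 := by
    intro h
    have : (1 - σ).re = 0 := by rw [h]; simp
    linarith
  set w : ℂ := (1 - σ) ^ ((1:ℂ)/2) with hw
  have hwre0 : 0 ≤ w.re := re_cpow_half_nonneg _
  have habs_w1 : 1 ≤ ‖w + 1‖ := by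
    have : (w+1).re ≤ ‖w+1‖ := Complex.re_le_norm _
    simp only [Complex.add_re, Complex.one_re] at this
    linarith
  have hwsub : ‖w - 1‖ ≤ 0.28 := by
    have hident : (w - 1) * (w + 1) = -σ := by
      have h := sq_cpow_half (1 - σ) hu0
      rw [← hw] at h
      linear_combination h
    have habs : ‖w-1‖ * ‖w+1‖ = ‖σ‖ := by
      rw [← norm_mul, hident, norm_neg]
    nlinarith [norm_nonneg (w-1)]
  have hre_w : 0.72 ≤ w.re := by
    have h1 : |(w-1).re| ≤ 0.28 := le_trans (Complex.abs_re_le_norm _) hwsub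
    have h2 : (w-1).re = w.re - 1 := by simp
    cases' abs_le.mp h1 with h3 h4
    rw [h2] at h3
    linarith
  exact ⟨hre_u, hre_w, habs_w1⟩

set_option maxHeartbeats 1000000 in
lemma deriv_bound (lam : ℂ) (L : ℝ) (hL : 1 ≤ L) (hlam : ‖lam‖ ≤ L^2)
    (n n2 k : ℕ) (ρ s t : ℝ) (hss : s * s = ρ) (hs316 : 316 ≤ s)
    (hNlow : 1.99*L*ρ ≤ (n:ℝ)) (hN2low : 1.91*L*ρ ≤ (n2:ℝ))
    (hN2 : (n2:ℝ) = (n:ℝ) - 2*(k:ℝ))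
    (hKlow : 11.9*L*s ≤ (k:ℝ))
    (ht : ρ ≤ t) (ht2 : t ≤ ρ + 2*s) :
    ∃ d : ℝ, HasDerivAt (fun x : ℝ =>
        (2*(k:ℝ)) * Real.log x + (gC lam n2 x).re - (gC lam n x).re) d t ∧ 7/s ≤ d := by
  have hLpos : (0:ℝ) < L := lt_of_lt_of_le one_pos hL
  have hs0 : (0:ℝ) < s := lt_of_lt_of_le (by norm_num) hs316
  have hρ0 : (0:ℝ) < ρ := by rw [← hss]; positivity
  have ht0 : (0:ℝ) < t := lt_of_lt_of_le hρ0 ht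
  have ht1 : t ≤ 1.01*ρ := by nlinarith
  have hNpos : (0:ℝ) < (n:ℝ) := lt_of_lt_of_le (by positivity) hNlow
  have hN2pos : (0:ℝ) < (n2:ℝ) := lt_of_lt_of_le (by positivity) hN2low
  have hKpos : (0:ℝ) < (k:ℝ) := lt_of_lt_of_le (by positivity) hKlow
  have hnne : (n:ℂ) ≠ 0 := Nat.cast_ne_zero.2 (by rintro rfl; norm_num at hNpos)
  have hn2ne : (n2:ℂ) ≠ 0 := Nat.cast_ne_zero.2 (by rintro rfl; norm_num at hN2pos)
  obtain ⟨hreu1, hrew1, habsw1⟩ :=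
    w_facts lam L ρ t hL hlam hρ0 n (le_trans (by nlinarith) hNlow) ht0 ht1
  obtain ⟨hreu2, hrew2, habsw2⟩ := w_facts lam L ρ t hL hlam hρ0 n2 hN2low ht0 ht1
  set w1 : ℂ := (1 - lam * (t:ℂ)^2 / (n:ℂ)^2) ^ ((1:ℂ)/2) with hw1def
  set w2 : ℂ := (1 - lam * (t:ℂ)^2 / (n2:ℂ)^2) ^ ((1:ℂ)/2) with hw2def
  have hw1ne : w1 + 1 ≠ 0 := by
    intro h; rw [h] at habsw1; simp at habsw1; linarith
  have hw2ne : w2 + 1 ≠ 0 := by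
    intro h; rw [h] at habsw2; simp at habsw2; linarith
  -- derivative
  have hd1 := (hasDerivAt_gC lam n hnne (t:ℂ) (by linarith)).real_of_complex
  have hd2 := (hasDerivAt_gC lam n2 hn2ne (t:ℂ) (by linarith)).real_of_complex
  have hdlog : HasDerivAt (fun x : ℝ => (2*(k:ℝ)) * Real.log x) (2*(k:ℝ)/t) t := by
    have := (Real.hasDerivAt_log (ne_of_gt ht0)).const_mul (2*(k:ℝ))
    simpa [div_eq_mul_inv] using this
  refine ⟨2*(k:ℝ)/t + (lam * (t:ℂ) / ((n2:ℂ) * (w2 + 1))).re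
      - (lam * (t:ℂ) / ((n:ℂ) * (w1 + 1))).re, (hdlog.add hd2).sub hd1, ?_⟩
  -- now the bound
  set A2 : ℂ := lam * (t:ℂ) / ((n2:ℂ) * (w2 + 1)) with hA2
  set A1 : ℂ := lam * (t:ℂ) / ((n:ℂ) * (w1 + 1)) with hA1
  set Q : ℂ := (n:ℂ) * (w1 + 1) - (n2:ℂ) * (w2 + 1) with hQ
  have hN2C : (n2:ℂ) = (n:ℂ) - 2*(k:ℂ) := by
    have := congrArg (fun x : ℝ => (x:ℂ)) hN2
    push_cast at this
    exact this
  -- bound on abs (n w1 - n2 w2)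
  have hw1sq : w1 * w1 = 1 - lam * (t:ℂ)^2 / (n:ℂ)^2 := by
    apply sq_cpow_half
    intro h; have : (1 - lam * (t:ℂ)^2 / (n:ℂ)^2).re = 0 := by rw [h]; simp
    linarith
  have hw2sq : w2 * w2 = 1 - lam * (t:ℂ)^2 / (n2:ℂ)^2 := by
    apply sq_cpow_half
    intro h; have : (1 - lam * (t:ℂ)^2 / (n2:ℂ)^2).re = 0 := by rw [h]; simp
    linarith
  set P : ℂ := (n:ℂ) * w1 + (n2:ℂ) * w2 with hP
  have hPre : 0.72 * ((n:ℝ) + (n2:ℝ)) ≤ P.re := by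
    have h1 : P.re = (n:ℝ) * w1.re + (n2:ℝ) * w2.re := by
      simp [hP, Complex.add_re, Complex.mul_re]
    rw [h1]
    have b1 := mul_le_mul_of_nonneg_left hrew1 hNpos.le
    have b2 := mul_le_mul_of_nonneg_left hrew2 hN2pos.le
    nlinarith
  have hPabs : 0.72 * ((n:ℝ) + (n2:ℝ)) ≤ ‖P‖ :=
    le_trans hPre (Complex.re_le_norm _)
  have hPne : P ≠ 0 := by
    intro h; rw [h] at hPabs; simp at hPabs; nlinarith
  have hprod : ((n:ℂ) * w1 - (n2:ℂ) * w2) * P = (((n:ℝ)^2 - (n2:ℝ)^2 : ℝ) : ℂ) := by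
    have expand : ((n:ℂ) * w1 - (n2:ℂ) * w2) * P
        = (n:ℂ)^2 * (w1 * w1) - (n2:ℂ)^2 * (w2 * w2) := by rw [hP]; ring
    rw [expand, hw1sq, hw2sq]
    push_cast
    field_simp
    try ring
  have habsdiff : ‖(n:ℂ) * w1 - (n2:ℂ) * w2‖ ≤ 2.78*(k:ℝ) := by
    have hNN : (n:ℝ)^2 - (n2:ℝ)^2 = 2*(k:ℝ)*((n:ℝ)+(n2:ℝ)) := by rw [hN2]; ring
    have h1 : ‖(n:ℂ) * w1 - (n2:ℂ) * w2‖ * ‖P‖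
        = 2*(k:ℝ)*((n:ℝ)+(n2:ℝ)) := by
      rw [← norm_mul, hprod, Complex.norm_real, Real.norm_eq_abs,
        _root_.abs_of_nonneg (by nlinarith : (0:ℝ) ≤ (n:ℝ)^2 - (n2:ℝ)^2)]
      exact hNN
    have h2 := norm_nonneg ((n:ℂ) * w1 - (n2:ℂ) * w2)
    nlinarith [mul_le_mul_of_nonneg_left hPabs h2, hNpos, hN2pos]
  have habsQ : ‖Q‖ ≤ 4.78*(k:ℝ) := by
    have h1 : Q = ((n:ℂ) * w1 - (n2:ℂ) * w2) + 2*(k:ℂ) := by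
      rw [hQ, hN2C]; ring
    rw [h1]
    refine le_trans (norm_add_le _ _) ?_
    have h2 : ‖2*(k:ℂ)‖ = 2*(k:ℝ) := by
      rw [norm_mul, Complex.norm_natCast]
      simp
    rw [h2]
    linarith [habsdiff]
  -- bound on abs (A2 - A1)
  have hDere : A2 - A1 = lam * (t:ℂ) * Q / ((n2:ℂ) * (w2 + 1) * ((n:ℂ) * (w1 + 1))) := by
    rw [hA2, hA1, hQ]
    field_simp
  have hDne0 : (0:ℝ) < (n2:ℝ) * ‖w2+1‖ * ((n:ℝ) * ‖w1+1‖) :=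
    mul_pos (mul_pos hN2pos (lt_of_lt_of_le one_pos habsw2))
      (mul_pos hNpos (lt_of_lt_of_le one_pos habsw1))
  have habsD : ‖A2 - A1‖ ≤ 1.33*(k:ℝ)/ρ := by
    have h1 : ‖A2 - A1‖ * ((n2:ℝ) * ‖w2+1‖ *
        ((n:ℝ) * ‖w1+1‖)) = ‖lam‖ * t * ‖Q‖ := by
      rw [hDere]
      simp only [norm_div, norm_mul, Complex.norm_real, Complex.norm_natCast, Real.norm_eq_abs]
      rw [_root_.abs_of_nonneg ht0.le, div_mul_cancel₀ _ (ne_of_gt hDne0)]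
    rw [le_div_iff₀ hρ0]
    have hD0 := norm_nonneg (A2 - A1)
    have hi1 : ‖lam‖ * t * ‖Q‖ ≤ L^2 * (1.01*ρ) * (4.78*(k:ℝ)) :=
      mul_le_mul (mul_le_mul hlam ht1 ht0.le (by positivity)) habsQ
        (norm_nonneg Q) (by positivity)
    have haa : 1 ≤ ‖w2+1‖ * ‖w1+1‖ := by
      have := mul_le_mul habsw2 habsw1 (by norm_num) (norm_nonneg _)
      linarith
    have hi2 : ‖A2 - A1‖ * ((n2:ℝ) * (n:ℝ))
        ≤ ‖A2 - A1‖ * ((n2:ℝ) * ‖w2+1‖ * ((n:ℝ) * ‖w1+1‖)) := by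
      have hint := mul_nonneg (mul_nonneg hD0 (mul_pos hN2pos hNpos).le) (sub_nonneg.2 haa)
      linarith [hint]
    have hi4 : 3.6481 * (L^2 * ρ^2) ≤ (n2:ℝ) * (n:ℝ) := by
      have hNlow' : 1.91*L*ρ ≤ (n:ℝ) := le_trans (by nlinarith) hNlow
      have := mul_le_mul hN2low hNlow' (by positivity) hN2pos.le
      nlinarith
    have step : ‖A2 - A1‖ * (3.6481 * (L^2 * ρ^2)) ≤ 4.8278*(L^2*ρ*(k:ℝ)) := by
      have hx := mul_le_mul_of_nonneg_left hi4 hD0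
      linarith [hx, hi2, h1.le, hi1]
    have hKL : (0:ℝ) ≤ L^2*ρ*(k:ℝ) := by positivity
    have step2 : ‖A2 - A1‖ * ρ * (3.6481*(L^2*ρ)) ≤ (1.33*(k:ℝ)) * (3.6481*(L^2*ρ)) := by
      linarith [step, hKL]

    exact le_of_mul_le_mul_right step2 (by positivity)
  -- final bound
  have hsplit : A2.re - A1.re = (A2 - A1).re := (Complex.sub_re A2 A1).symm
  have hfinal : 7/s + 1.33*(k:ℝ)/ρ ≤ 2*(k:ℝ)/(1.01*ρ) := by
    rw [div_add_div _ _ (ne_of_gt hs0) (ne_of_gt hρ0), div_le_div_iff₀ (by positivity) (by positivity)]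
    have hK' : 11.9*s ≤ (k:ℝ) := by nlinarith [mul_nonneg (sub_nonneg.2 hL) hs0.le]
    have hA := mul_le_mul_of_nonneg_right hK' (mul_pos hs0 hρ0).le
    have hB : s*s*ρ = ρ*ρ := by rw [hss]
    linarith only [hA, hB, mul_pos hρ0 hρ0]
  have h2kt : 2*(k:ℝ)/(1.01*ρ) ≤ 2*(k:ℝ)/t := by
    gcongr
  have habsD' : -(1.33*(k:ℝ)/ρ) ≤ A2.re - A1.re := by
    rw [hsplit]
    have h1 := Complex.abs_re_le_norm (A2 - A1)
    have h2 := abs_le.1 h1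
    linarith [h2.1, habsD]
  linarith

set_option maxHeartbeats 1000000 in
theorem stmt17 (lam : ℂ) :
    ∃ (C ρ₀ : ℝ), 0 < C ∧ 0 < ρ₀ ∧
      ∀ ρ : ℝ, ρ₀ ≤ ρ → ∀ n k : ℕ,
        |(n : ℝ) - 2 * Real.sqrt (max 1 (‖lam‖)) * ρ| ≤ 1 →
        |(k : ℝ) - 12 * Real.sqrt (max 1 (‖lam‖)) * Real.sqrt ρ| ≤ 1 →
        (∀ r ∈ Set.Icc ρ (ρ + 2 / 3 * Real.sqrt ρ),
          ‖(((ρ + Real.sqrt ρ : ℝ) : ℂ) ^ (-(2 * k : ℤ)) *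
              (mu lam n (ρ + Real.sqrt ρ) / mu lam (n - 2 * k) (ρ + Real.sqrt ρ))) *
            (r : ℂ) ^ (2 * k) * (mu lam (n - 2 * k) r / mu lam n r)‖ ≤ Real.exp (-C)) ∧
        (∀ r ∈ Set.Icc (ρ + 4 / 3 * Real.sqrt ρ) (ρ + 2 * Real.sqrt ρ),
          Real.exp C ≤
            ‖(((ρ + Real.sqrt ρ : ℝ) : ℂ) ^ (-(2 * k : ℤ)) *
                (mu lam n (ρ + Real.sqrt ρ) / mu lam (n - 2 * k) (ρ + Real.sqrt ρ))) *
              (r : ℂ) ^ (2 * k) * (mu lam (n - 2 * k) r / mu lam n r)‖) := by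
  have hmax1 : (1:ℝ) ≤ max 1 (‖lam‖) := le_max_left _ _
  set L : ℝ := Real.sqrt (max 1 (‖lam‖)) with hLdef
  have hL1 : 1 ≤ L :=
    le_trans (by simp : (1:ℝ) ≤ Real.sqrt 1) (Real.sqrt_le_sqrt hmax1)
  have hLsq : L^2 = max 1 (‖lam‖) := Real.sq_sqrt (by positivity)
  have hlam : ‖lam‖ ≤ L^2 := by rw [hLsq]; exact le_max_right _ _
  refine ⟨2, 100000, by norm_num, by norm_num, ?_⟩
  intro ρ hρ n k hn hk
  have hρ0 : (0:ℝ) < ρ := by linarith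
  set s : ℝ := Real.sqrt ρ with hsdef
  have hss : s * s = ρ := Real.mul_self_sqrt hρ0.le
  have hs316 : 316 ≤ s := by
    have h1 := Real.sqrt_le_sqrt (show (99856:ℝ) ≤ ρ by linarith)
    rw [show (99856:ℝ) = 316^2 by norm_num, Real.sqrt_sq (by norm_num : (0:ℝ) ≤ 316)] at h1
    exact h1
  have hs0 : (0:ℝ) < s := by linarith
  have hL0 : (0:ℝ) < L := by linarith
  obtain ⟨hn1, hn2'⟩ := abs_le.1 hn
  obtain ⟨hk1, hk2'⟩ := abs_le.1 hk
  have hLρ : 100000 ≤ L * ρ := by nlinarith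
  have hLs : 316 ≤ L * s := by nlinarith
  have hNlow : 1.99 * L * ρ ≤ (n:ℝ) := by nlinarith
  have hKlow : 11.9 * L * s ≤ (k:ℝ) := by nlinarith
  have hKhigh : (k:ℝ) ≤ 12.1 * L * s := by nlinarith
  have h2k_le : 2 * k ≤ n := by
    have hr : 2 * (k:ℝ) ≤ (n:ℝ) := by nlinarith [mul_pos hL0 hs0]
    exact_mod_cast hr
  have hcast : ((n - 2*k : ℕ) : ℝ) = (n:ℝ) - 2*(k:ℝ) := by
    rw [Nat.cast_sub h2k_le]
    push_cast
    ring
  have hN2low : 1.91 * L * ρ ≤ ((n - 2*k : ℕ) : ℝ) := by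
    rw [hcast]
    nlinarith [mul_pos hL0 hs0]
  have key : ∀ t ∈ Set.Icc ρ (ρ + 2*s), ∃ d : ℝ, HasDerivAt (fun x : ℝ =>
      (2*(k:ℝ)) * Real.log x + (gC lam (n - 2*k) x).re - (gC lam n x).re) d t ∧ 7/s ≤ d :=
    fun t ht => deriv_bound lam L hL1 hlam n (n - 2*k) k ρ s t hss hs316
      hNlow hN2low hcast hKlow ht.1 ht.2
  have hcont : ContinuousOn (fun x : ℝ =>
      (2*(k:ℝ)) * Real.log x + (gC lam (n - 2*k) x).re - (gC lam n x).re)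
      (Set.Icc ρ (ρ + 2*s)) := fun t ht =>
    ((key t ht).choose_spec.1).continuousAt.continuousWithinAt
  have hdiff : DifferentiableOn ℝ (fun x : ℝ =>
      (2*(k:ℝ)) * Real.log x + (gC lam (n - 2*k) x).re - (gC lam n x).re)
      (interior (Set.Icc ρ (ρ + 2*s))) := by
    rw [interior_Icc]
    exact fun t ht =>
      ((key t (Set.Ioo_subset_Icc_self ht)).choose_spec.1).differentiableAt.differentiableWithinAt
  have hge : ∀ x ∈ interior (Set.Icc ρ (ρ + 2*s)), 7/s ≤ deriv (fun x : ℝ =>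
      (2*(k:ℝ)) * Real.log x + (gC lam (n - 2*k) x).re - (gC lam n x).re) x := by
    rw [interior_Icc]
    intro x hx
    obtain ⟨d, hd, hb⟩ := key x (Set.Ioo_subset_Icc_self hx)
    rw [hd.deriv]
    exact hb
  have mono := (convex_Icc ρ (ρ + 2*s)).mul_sub_le_image_sub_of_le_deriv hcont hdiff hge
  have hr1mem : ρ + s ∈ Set.Icc ρ (ρ + 2*s) := ⟨by linarith, by linarith⟩
  have hr10 : (0:ℝ) < ρ + s := by linarith
  constructor
  · intro r hr
    have hrmem : r ∈ Set.Icc ρ (ρ + 2*s) := ⟨hr.1, by linarith [hr.2]⟩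
    have hr0 : (0:ℝ) < r := lt_of_lt_of_le hρ0 hr.1
    have h := mono r hrmem (ρ + s) hr1mem (by linarith [hr.2])
    rw [norm_R lam n (n - 2*k) k r (ρ + s) hr0 hr10]
    rw [Real.exp_le_exp]
    have hgap : 7/s * (s/3) ≤ 7/s * ((ρ + s) - r) := by
      have : s/3 ≤ (ρ + s) - r := by linarith [hr.2]
      exact mul_le_mul_of_nonneg_left this (by positivity)
    have heq : 7/s * (s/3) = 7/3 := by field_simp
    linarith
  · intro r hr
    have hrmem : r ∈ Set.Icc ρ (ρ + 2*s) := ⟨by linarith [hr.1], hr.2⟩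
    have hr0 : (0:ℝ) < r := by have := hr.1; linarith
    have h := mono (ρ + s) hr1mem r hrmem (by linarith [hr.1])
    rw [norm_R lam n (n - 2*k) k r (ρ + s) hr0 hr10]
    rw [Real.exp_le_exp]
    have hgap : 7/s * (s/3) ≤ 7/s * (r - (ρ + s)) := by
      have : s/3 ≤ r - (ρ + s) := by linarith [hr.1]
      exact mul_le_mul_of_nonneg_left this (by positivity)
    have heq : 7/s * (s/3) = 7/3 := by field_simp
    linarith
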